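/- Assume v is bounded and set h₊ = sup_{t∈ℝ} v(t). Then for every n ∈ ℤ and every x ∈ gₙ, Vₙ(x) ≤ 2 h₊ / (π ρₙ). -/

import Mathlib

open MeasureTheory Set Filter

lemma stmt15_aux_right (a r : ℝ) (hr : 0 < r) :
    IntegrableOn (fun t : ℝ => ((t - a)⁻¹) ^ 2) (Ioi (a + r)) ∧
    ∫ t in Ioi (a + r), ((t - a)⁻¹) ^ 2 = r⁻¹ := by
  have hderiv : ∀ t ∈ Ici (a + r),
      HasDerivAt (fun t : ℝ => -(t - a)⁻¹) (((t - a)⁻¹) ^ 2) t := by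
    intro t ht
    have hne : t - a ≠ 0 := by simp only [mem_Ici] at ht; intro h; nlinarith
    have h1 : HasDerivAt (fun t : ℝ => t - a) 1 t := (hasDerivAt_id t).sub_const a
    have h2 := (h1.inv hne).neg
    exact h2.congr_deriv (by simp only [inv_pow, neg_div, neg_neg, one_div])
  have htend : Tendsto (fun t : ℝ => -(t - a)⁻¹) atTop (nhds 0) := by
    have h0 : Tendsto (fun t : ℝ => t - a) atTop atTop :=
      tendsto_atTop_add_const_right _ (-a) tendsto_id
    simpa using (h0.inv_tendsto_atTop).neg
  have hint : IntegrableOn (fun t : ℝ => ((t - a)⁻¹) ^ 2) (Ioi (a + r)) :=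
    integrableOn_Ioi_deriv_of_nonneg' hderiv (fun t _ => sq_nonneg _) htend
  refine ⟨hint, ?_⟩
  rw [integral_Ioi_of_hasDerivAt_of_tendsto' hderiv hint htend]
  simp [add_sub_cancel_left]

lemma stmt15_aux_left (a r : ℝ) (hr : 0 < r) :
    IntegrableOn (fun t : ℝ => ((a - t)⁻¹) ^ 2) (Iic (a - r)) ∧
    ∫ t in Iic (a - r), ((a - t)⁻¹) ^ 2 = r⁻¹ := by
  obtain ⟨hint, hval⟩ := stmt15_aux_right (-a) r hr
  have m : MeasurableEmbedding fun x : ℝ => -x := (Homeomorph.neg ℝ).measurableEmbedding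
  have hia : IntegrableOn (fun t : ℝ => ((t - -a)⁻¹) ^ 2) (Ici (-a + r)) :=
    Iff.mpr integrableOn_Ici_iff_integrableOn_Ioi hint
  have hmap : (volume : Measure ℝ) = Measure.map (fun x : ℝ => -x) volume := by
    rw [show (fun x : ℝ => -x) = (Neg.neg : ℝ → ℝ) from rfl, Measure.map_neg_eq_self]
  constructor
  · rw [IntegrableOn, hmap, ← IntegrableOn, m.integrableOn_map_iff]
    have hfun : ((fun t : ℝ => ((a - t)⁻¹) ^ 2) ∘ fun x : ℝ => -x)
        = fun t : ℝ => ((t - -a)⁻¹) ^ 2 := by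
      funext t; simp only [Function.comp]; ring_nf
    rw [hfun]
    have hset : (fun x : ℝ => -x) ⁻¹' Iic (a - r) = Ici (-a + r) := by
      ext t
      simp only [mem_preimage, mem_Iic, mem_Ici]
      constructor <;> intro h <;> linarith
    rw [hset]; exact hia
  · have hcn := integral_comp_neg_Iic (a - r) (fun x : ℝ => ((x - -a)⁻¹) ^ 2)
    have hfun : (fun x : ℝ => ((-x - -a)⁻¹) ^ 2) = fun x : ℝ => ((a - x)⁻¹) ^ 2 := by
      funext t; ring_nf
    rw [hfun] at hcn
    rw [hcn, show -(a - r) = -a + r by ring]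
    exact hval

theorem stmt_15
    (zm zp : ℤ → ℝ)
    (hz : ∀ n, zm n < zp n)
    (hsep : ∀ n, zp n < zm (n + 1))
    (v : ℝ → ℝ)
    (hvmeas : Measurable v)
    (hvint : MeasureTheory.Integrable v)
    (hvnn : ∀ t, 0 ≤ v t)
    (hvsupp : ∀ t ∉ ⋃ n : ℤ, Set.Ioo (zm n) (zp n), v t = 0)
    (vn : ℤ → ℝ → ℝ)
    (hvn : ∀ n x, vn n x = Real.sqrt (|x - zm n| * |x - zp n|))
    (ρ : ℤ → ℝ)
    (hρ : ∀ n, ρ n = sInf (Set.image2 dist (Set.Ioo (zm n) (zp n))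
      ((⋃ m : ℤ, Set.Ioo (zm m) (zp m)) \ Set.Ioo (zm n) (zp n))))
    (hρpos : ∀ n, 0 < ρ n)
    (Vn : ℤ → ℝ → ℝ)
    (hVn : ∀ n x, Vn n x = (1 / Real.pi) *
      ∫ t in ((⋃ m : ℤ, Set.Ioo (zm m) (zp m)) \ Set.Ioo (zm n) (zp n)),
        v t / (|t - x| * vn n t))
    (hplus : ℝ) (hbdd : IsLUB (Set.range v) hplus)
    :
    ∀ n : ℤ, ∀ x ∈ Set.Ioo (zm n) (zp n), Vn n x ≤ 2 * hplus / (Real.pi * ρ n) := by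
  intro n x hx
  obtain ⟨hx1, hx2⟩ := hx
  set S : Set ℝ := (⋃ m : ℤ, Set.Ioo (zm m) (zp m)) \ Set.Ioo (zm n) (zp n) with hSdef
  -- ordering of the intervals
  have hord : ∀ m k : ℤ, m < k → zp m ≤ zm k := by
    intro m k hmk
    have h : ∀ k : ℤ, m + 1 ≤ k → zp m ≤ zm k := by
      refine fun k hk => Int.le_induction (motive := fun k _ => zp m ≤ zm k) ?_ ?_ k hk
      · exact (hsep m).le
      · intro k hk ih
        exact ih.trans ((hz k).le.trans (hsep k).le)
    exact h k (by omega)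
  -- distance bound
  have hdist : ∀ x' ∈ Set.Ioo (zm n) (zp n), ∀ t ∈ S, ρ n ≤ |x' - t| := by
    intro x' hx' t ht
    have hbb : BddBelow (Set.image2 dist (Set.Ioo (zm n) (zp n)) S) := by
      refine ⟨0, ?_⟩
      rintro d ⟨p, hp, q, hq, rfl⟩
      exact dist_nonneg
    have := csInf_le hbb (Set.mem_image2_of_mem hx' ht)
    rw [← hρ n] at this
    rwa [Real.dist_eq] at this
  have hρn := hρpos n
  -- every point of S is in one of the two tails
  have htail : ∀ t ∈ S, t ≤ zm n - ρ n ∨ zp n + ρ n ≤ t := by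
    intro t ht
    obtain ⟨htg, htn⟩ := ht
    rw [Set.mem_iUnion] at htg
    obtain ⟨m, htm⟩ := htg
    have hmn : m ≠ n := by rintro rfl; exact htn htm
    have htS : t ∈ S := ⟨Set.mem_iUnion.mpr ⟨m, htm⟩, htn⟩
    rcases lt_or_gt_of_ne hmn with h | h
    · left
      have htlt : t < zm n := lt_of_lt_of_le htm.2 (hord m n h)
      have key : ρ n ≤ zm n - t := by
        refine le_of_forall_pos_le_add fun ε hε => ?_
        have hδpos : 0 < min ε (zp n - zm n) / 2 :=
          div_pos (lt_min hε (by linarith [hz n])) two_pos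
        have hδ1 : min ε (zp n - zm n) / 2 ≤ ε := by
          have := min_le_left ε (zp n - zm n); linarith
        have hδ2 : min ε (zp n - zm n) / 2 < zp n - zm n := by
          have := min_le_right ε (zp n - zm n); linarith
        have hx' : zm n + min ε (zp n - zm n) / 2 ∈ Set.Ioo (zm n) (zp n) :=
          ⟨by linarith, by linarith⟩
        have hd := hdist _ hx' t htS
        rw [abs_of_pos (by linarith)] at hd
        linarith
      linarith
    · right
      have htgt : zp n < t := lt_of_le_of_lt (hord n m h) htm.1
      have key : ρ n ≤ t - zp n := by
        refine le_of_forall_pos_le_add fun ε hε => ?_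
        have hδpos : 0 < min ε (zp n - zm n) / 2 :=
          div_pos (lt_min hε (by linarith [hz n])) two_pos
        have hδ1 : min ε (zp n - zm n) / 2 ≤ ε := by
          have := min_le_left ε (zp n - zm n); linarith
        have hδ2 : min ε (zp n - zm n) / 2 < zp n - zm n := by
          have := min_le_right ε (zp n - zm n); linarith
        have hx' : zp n - min ε (zp n - zm n) / 2 ∈ Set.Ioo (zm n) (zp n) :=
          ⟨by linarith, by linarith⟩
        have hd := hdist _ hx' t htS
        rw [abs_of_neg (by linarith)] at hd
        linarith
      linarith
  -- basic facts
  have hvle : ∀ t, v t ≤ hplus := fun t => hbdd.1 ⟨t, rfl⟩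
  have hplus0 : 0 ≤ hplus := (hvnn 0).trans (hvle 0)
  have hvnnn : ∀ t, 0 ≤ vn n t := fun t => by rw [hvn]; exact Real.sqrt_nonneg _
  have hπ : (0 : ℝ) < Real.pi := Real.pi_pos
  -- the majorant
  obtain ⟨hintL, hvalL⟩ := stmt15_aux_left (zm n) (ρ n) hρn
  obtain ⟨hintR', hvalR'⟩ := stmt15_aux_right (zp n) (ρ n) hρn
  have hintR : IntegrableOn (fun t : ℝ => ((t - zp n)⁻¹) ^ 2) (Ici (zp n + ρ n)) :=
    Iff.mpr integrableOn_Ici_iff_integrableOn_Ioi hintR'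
  have hvalR : ∫ t in Ici (zp n + ρ n), ((t - zp n)⁻¹) ^ 2 = (ρ n)⁻¹ := by
    rw [integral_Ici_eq_integral_Ioi]; exact hvalR'
  set fL : ℝ → ℝ := fun t => hplus * ((zm n - t)⁻¹) ^ 2 with hfL
  set fR : ℝ → ℝ := fun t => hplus * ((t - zp n)⁻¹) ^ 2 with hfR
  set M : ℝ → ℝ := fun t =>
    (Iic (zm n - ρ n)).indicator fL t + (Ici (zp n + ρ n)).indicator fR t with hM
  have hML : Integrable ((Iic (zm n - ρ n)).indicator fL) :=
    MeasureTheory.IntegrableOn.integrable_indicator (hintL.const_mul hplus) measurableSet_Iic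
  have hMR : Integrable ((Ici (zp n + ρ n)).indicator fR) :=
    MeasureTheory.IntegrableOn.integrable_indicator (hintR.const_mul hplus) measurableSet_Ici
  have hMint : Integrable M := hML.add hMR
  have hMnn : ∀ t, 0 ≤ M t := by
    intro t
    apply add_nonneg
    · exact Set.indicator_nonneg (fun s _ => mul_nonneg hplus0 (sq_nonneg _)) t
    · exact Set.indicator_nonneg (fun s _ => mul_nonneg hplus0 (sq_nonneg _)) t
  have hMval : ∫ t, M t = hplus * (ρ n)⁻¹ + hplus * (ρ n)⁻¹ := by
    rw [hM]
    rw [integral_add hML hMR, integral_indicator measurableSet_Iic,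
      integral_indicator measurableSet_Ici, hfL, hfR]
    simp only
    rw [integral_const_mul, integral_const_mul, hvalL, hvalR]
  -- measurability of the integrand
  have hvnm : Measurable (vn n) := by
    have : vn n = fun t => Real.sqrt (|t - zm n| * |t - zp n|) := funext (hvn n)
    rw [this]
    exact ((measurable_id.sub_const _).abs.mul (measurable_id.sub_const _).abs).sqrt
  have hfmeas : Measurable fun t => v t / (|t - x| * vn n t) :=
    hvmeas.div ((measurable_id.sub_const x).abs.mul hvnm)
  have hfnn : ∀ t, 0 ≤ v t / (|t - x| * vn n t) := fun t =>
    div_nonneg (hvnn t) (mul_nonneg (abs_nonneg _) (hvnnn t))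
  have hSmeas : MeasurableSet S :=
    (MeasurableSet.iUnion fun m => measurableSet_Ioo).diff measurableSet_Ioo
  -- pointwise bound on S
  have hfM : ∀ t ∈ S, v t / (|t - x| * vn n t) ≤ M t := by
    intro t ht
    rcases htail t ht with h | h
    · have ht1 : t < zm n := by linarith
      have hd1 : ρ n ≤ zm n - t := by linarith
      have habs : zm n - t ≤ |t - x| := by
        rw [abs_sub_comm, abs_of_pos (by linarith)]
        linarith
      have hvnb : zm n - t ≤ vn n t := by
        rw [hvn]
        rw [show |t - zm n| = zm n - t by rw [abs_sub_comm, abs_of_pos (by linarith)]]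
        rw [show |t - zp n| = zp n - t by
          rw [abs_sub_comm, abs_of_pos (by linarith [hz n])]]
        calc zm n - t = Real.sqrt ((zm n - t) * (zm n - t)) :=
              (Real.sqrt_mul_self (by linarith)).symm
          _ ≤ Real.sqrt ((zm n - t) * (zp n - t)) :=
              Real.sqrt_le_sqrt (by nlinarith [hz n])
      have hden : (zm n - t) ^ 2 ≤ |t - x| * vn n t := by
        have h0 : (0 : ℝ) < zm n - t := by linarith
        calc (zm n - t) ^ 2 = (zm n - t) * (zm n - t) := by ring
          _ ≤ |t - x| * vn n t := by
            apply mul_le_mul habs hvnb (by linarith) (abs_nonneg _)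
      have hb : v t / (|t - x| * vn n t) ≤ hplus / (zm n - t) ^ 2 :=
        div_le_div₀ hplus0 (hvle t) (pow_pos (by linarith : (0:ℝ) < zm n - t) 2) hden
      have hfLt : hplus / (zm n - t) ^ 2 = fL t := by
        rw [hfL]; simp only; rw [inv_pow, div_eq_mul_inv]
      have hmem : t ∈ Iic (zm n - ρ n) := h
      calc v t / (|t - x| * vn n t) ≤ fL t := hfLt ▸ hb
        _ = (Iic (zm n - ρ n)).indicator fL t := (Set.indicator_of_mem hmem fL).symm
        _ ≤ M t := le_add_of_nonneg_right
            (Set.indicator_nonneg (fun s _ => mul_nonneg hplus0 (sq_nonneg _)) t)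
    · have ht1 : zp n < t := by linarith
      have hd1 : ρ n ≤ t - zp n := by linarith
      have habs : t - zp n ≤ |t - x| := by
        rw [abs_of_pos (by linarith)]
        linarith
      have hvnb : t - zp n ≤ vn n t := by
        rw [hvn]
        rw [show |t - zm n| = t - zm n by rw [abs_of_pos (by linarith [hz n])]]
        rw [show |t - zp n| = t - zp n by rw [abs_of_pos (by linarith)]]
        calc t - zp n = Real.sqrt ((t - zp n) * (t - zp n)) :=
              (Real.sqrt_mul_self (by linarith)).symm
          _ ≤ Real.sqrt ((t - zm n) * (t - zp n)) :=
              Real.sqrt_le_sqrt (by nlinarith [hz n])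
      have hden : (t - zp n) ^ 2 ≤ |t - x| * vn n t := by
        have h0 : (0 : ℝ) < t - zp n := by linarith
        calc (t - zp n) ^ 2 = (t - zp n) * (t - zp n) := by ring
          _ ≤ |t - x| * vn n t := by
            apply mul_le_mul habs hvnb (by linarith) (abs_nonneg _)
      have hb : v t / (|t - x| * vn n t) ≤ hplus / (t - zp n) ^ 2 :=
        div_le_div₀ hplus0 (hvle t) (pow_pos (by linarith : (0:ℝ) < t - zp n) 2) hden
      have hfRt : hplus / (t - zp n) ^ 2 = fR t := by
        rw [hfR]; simp only; rw [inv_pow, div_eq_mul_inv]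
      have hmem : t ∈ Ici (zp n + ρ n) := h
      calc v t / (|t - x| * vn n t) ≤ fR t := hfRt ▸ hb
        _ = (Ici (zp n + ρ n)).indicator fR t := (Set.indicator_of_mem hmem fR).symm
        _ ≤ M t := le_add_of_nonneg_left
            (Set.indicator_nonneg (fun s _ => mul_nonneg hplus0 (sq_nonneg _)) t)
  -- integrability of the integrand on S
  have hfint : IntegrableOn (fun t => v t / (|t - x| * vn n t)) S := by
    apply Integrable.mono' hMint.integrableOn hfmeas.aestronglyMeasurable
    filter_upwards [ae_restrict_mem hSmeas] with t ht
    rw [Real.norm_eq_abs, abs_of_nonneg (hfnn t)]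
    exact hfM t ht
  -- the integral bound
  have hintle : ∫ t in S, v t / (|t - x| * vn n t) ≤ hplus * (ρ n)⁻¹ + hplus * (ρ n)⁻¹ := by
    calc ∫ t in S, v t / (|t - x| * vn n t) ≤ ∫ t in S, M t :=
          setIntegral_mono_on hfint hMint.integrableOn hSmeas hfM
      _ ≤ ∫ t, M t := setIntegral_le_integral hMint (Eventually.of_forall hMnn)
      _ = hplus * (ρ n)⁻¹ + hplus * (ρ n)⁻¹ := hMval
  rw [hVn n x]
  calc (1 / Real.pi) * ∫ t in S, v t / (|t - x| * vn n t)
      ≤ (1 / Real.pi) * (hplus * (ρ n)⁻¹ + hplus * (ρ n)⁻¹) :=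
        mul_le_mul_of_nonneg_left hintle (by positivity)
    _ = 2 * hplus / (Real.pi * ρ n) := by
        field_simp
        ring
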